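/- arXiv:1110.6740 — 2 statements merged into one kernel-verified Lean document; each statement's English description precedes it below -/
import Mathlib

section
/- Let K ⊆ ℂ be a nonempty compact convex set and let φ be an entire function of exponential type. Then φ(D) maps Exp(K) into Exp(K) and is continuous with respect to the norms ‖·‖_{K,n}: for every n ≥ 1 there exist m ≥ 1 and a constant C > 0 such that ‖φ(D)f‖_{K,n} ≤ C‖f‖_{K,m} for all f ∈ Exp(K). -/
open Filter Complex Set

/-- `log` with the convention `log 0 = -∞`, valued in the extended reals. -/
noncomputable def elog (x : ℝ) : EReal :=
  if x = 0 then (⊥ : EReal) else ((Real.log x : ℝ) : EReal)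

/-- Maximum modulus `M_f(r) = max_{|z|=r} |f z|`. -/
noncomputable def maxMod (f : ℂ → ℂ) (r : ℝ) : ℝ :=
  sSup ((fun z => ‖f z‖) '' Metric.sphere (0 : ℂ) r)

/-- The exponential type `τ(f) = limsup_{r→∞} log M_f(r) / r` (valued in `EReal`,
with the convention `log 0 = -∞`; note `log (M_f(r)^{1/r}) = log M_f(r) / r` for `r > 0`). -/
noncomputable def expType (f : ℂ → ℂ) : EReal :=
  Filter.limsup (fun r : ℝ => elog (maxMod f r ^ (1 / r))) Filter.atTop

/-- The indicator function `h_f(θ) = limsup_{r→∞} log |f (r e^{iθ})| / r`. -/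
noncomputable def indicatorFn (f : ℂ → ℂ) (θ : ℝ) : EReal :=
  Filter.limsup
    (fun r : ℝ => elog (‖f ((r : ℂ) * Complex.exp ((θ : ℂ) * Complex.I))‖ ^ (1 / r)))
    Filter.atTop

/-- Support function `H_K(z) = sup {Re (z u) : u ∈ K}`. -/
noncomputable def suppFn (K : Set ℂ) (z : ℂ) : ℝ :=
  sSup ((fun u => (z * u).re) '' K)

/-- The differential operator `φ(D) f = ∑ (φ^{(n)}(0)/n!) f^{(n)}`. -/
noncomputable def phiD (φ : ℂ → ℂ) (f : ℂ → ℂ) : ℂ → ℂ :=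
  fun z => ∑' n : ℕ, (iteratedDeriv n φ 0 / (Nat.factorial n : ℂ)) * iteratedDeriv n f z

/-- The norm `‖f‖_{K,n} = sup_z |f z| e^{-H_K(z) - |z|/n}`. -/
noncomputable def expNorm (K : Set ℂ) (n : ℕ) (f : ℂ → ℂ) : ℝ :=
  sSup (Set.range fun z : ℂ => ‖f z‖ * Real.exp (-suppFn K z - ‖z‖ / (n : ℝ)))

/-- Membership in `Exp(K)`: entire and `‖f‖_{K,n} < ∞` for all `n ≥ 1`. -/
def memExp (K : Set ℂ) (f : ℂ → ℂ) : Prop :=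
  Differentiable ℂ f ∧ ∀ n : ℕ, 1 ≤ n →
    BddAbove (Set.range fun z : ℂ =>
      ‖f z‖ * Real.exp (-suppFn K z - ‖z‖ / (n : ℝ)))

/-- Lower density of a set of natural numbers. -/
noncomputable def lowerDensity (A : Set ℕ) : ℝ :=
  Filter.liminf (fun N : ℕ => ((A ∩ Set.Iic N).ncard : ℝ) / (N : ℝ)) Filter.atTop

/-- `f` is hypercyclic for `φ(D)` on `H(ℂ)`. -/
def HC (φ f : ℂ → ℂ) : Prop :=
  ∀ g : ℂ → ℂ, Differentiable ℂ g → ∀ L : Set ℂ, IsCompact L → ∀ ε : ℝ, 0 < ε →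
    ∃ m : ℕ, ∀ z ∈ L, ‖(phiD φ)^[m] f z - g z‖ < ε

/-- `f` is frequently hypercyclic for `φ(D)` on `H(ℂ)`. -/
def FHC (φ f : ℂ → ℂ) : Prop :=
  ∀ g : ℂ → ℂ, Differentiable ℂ g → ∀ L : Set ℂ, IsCompact L → ∀ ε : ℝ, 0 < ε →
    0 < lowerDensity {m : ℕ | ∀ z ∈ L, ‖(phiD φ)^[m] f z - g z‖ < ε}

/-- `f` is hypercyclic for `φ(D)` on `Exp(K)`. -/
def HCExp (K : Set ℂ) (φ f : ℂ → ℂ) : Prop :=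
  memExp K f ∧ ∀ g : ℂ → ℂ, memExp K g → ∀ n : ℕ, 1 ≤ n → ∀ ε : ℝ, 0 < ε →
    ∃ m : ℕ, expNorm K n (fun z => (phiD φ)^[m] f z - g z) < ε

/-- `f` is frequently hypercyclic for `φ(D)` on `Exp(K)`. -/
def FHCExp (K : Set ℂ) (φ f : ℂ → ℂ) : Prop :=
  memExp K f ∧ ∀ g : ℂ → ℂ, memExp K g → ∀ n : ℕ, 1 ≤ n → ∀ ε : ℝ, 0 < ε →
    0 < lowerDensity {m : ℕ | expNorm K n (fun z => (phiD φ)^[m] f z - g z) < ε}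

/-- The Borel transform `Bf(z) = ∑ f^{(n)}(0) z^{-(n+1)}`. -/
noncomputable def borelT (f : ℂ → ℂ) : ℂ → ℂ :=
  fun z => ∑' n : ℕ, iteratedDeriv n f 0 / z ^ (n + 1)

/-- The transform `Φ_φ f (z) = ∑ (φ(D)^n f)(0) z^n / n!`. -/
noncomputable def PhiT (φ f : ℂ → ℂ) : ℂ → ℂ :=
  fun z => ∑' n : ℕ, ((phiD φ)^[n] f 0) * z ^ n / (Nat.factorial n : ℂ)


section Aux

open Real

lemma exp_shift {x y a : ℝ} (h : x * Real.exp (-y) ≤ a) : x ≤ a * Real.exp y := by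
  have h2 := mul_le_mul_of_nonneg_right h (Real.exp_pos y).le
  rwa [mul_assoc, ← Real.exp_add, neg_add_cancel, Real.exp_zero, mul_one] at h2

lemma exp_shift' {x y a : ℝ} (h : x ≤ a * Real.exp y) : x * Real.exp (-y) ≤ a := by
  have h2 := mul_le_mul_of_nonneg_right h (Real.exp_pos (-y)).le
  rwa [mul_assoc, ← Real.exp_add, add_neg_cancel, Real.exp_zero, mul_one] at h2

lemma suppFn_ge {K : Set ℂ} (hK : IsCompact K) {u : ℂ} (hu : u ∈ K) (z : ℂ) :
    (z * u).re ≤ suppFn K z :=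
  le_csSup ((hK.image (by fun_prop)).bddAbove) ⟨u, hu, rfl⟩

lemma suppFn_le {K : Set ℂ} (hKne : K.Nonempty) {z : ℂ} {M : ℝ}
    (hM : ∀ u ∈ K, (z * u).re ≤ M) : suppFn K z ≤ M :=
  csSup_le (hKne.image _) (by rintro x ⟨u, hu, rfl⟩; exact hM u hu)

lemma suppFn_sub {K : Set ℂ} (hKne : K.Nonempty) (hKcomp : IsCompact K) {Rk : ℝ}
    (hRk : ∀ u ∈ K, ‖u‖ ≤ Rk) (z w : ℂ) :
    suppFn K w ≤ suppFn K z + Rk * ‖w - z‖ := by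
  refine suppFn_le hKne fun u hu => ?_
  have h1 : w * u = z * u + (w - z) * u := by ring
  rw [h1, Complex.add_re]
  have h2 : ((w - z) * u).re ≤ ‖w - z‖ * Rk := by
    calc ((w - z) * u).re ≤ ‖(w - z) * u‖ := Complex.re_le_norm _
      _ = ‖w - z‖ * ‖u‖ := norm_mul _ _
      _ ≤ ‖w - z‖ * Rk :=
        mul_le_mul_of_nonneg_left (hRk u hu) (norm_nonneg _)
  have h3 := suppFn_ge hKcomp hu z
  have h4 : ‖w - z‖ * Rk = Rk * ‖w - z‖ := mul_comm _ _
  linarith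

lemma suppFn_le_mul {K : Set ℂ} (hKne : K.Nonempty) {Rk : ℝ}
    (hRk : ∀ u ∈ K, ‖u‖ ≤ Rk) (z : ℂ) : suppFn K z ≤ Rk * ‖z‖ := by
  refine suppFn_le hKne fun u hu => ?_
  calc (z * u).re ≤ ‖z * u‖ := Complex.re_le_norm _
    _ = ‖z‖ * ‖u‖ := norm_mul _ _
    _ ≤ ‖z‖ * Rk := mul_le_mul_of_nonneg_left (hRk u hu) (norm_nonneg z)
    _ = Rk * ‖z‖ := mul_comm _ _

lemma diff_deriv {f : ℂ → ℂ} (hf : Differentiable ℂ f) : Differentiable ℂ (deriv f) := by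
  rw [← differentiableOn_univ] at hf ⊢
  exact ((hf.analyticOnNhd isOpen_univ).deriv).differentiableOn

lemma diff_iter {f : ℂ → ℂ} (hf : Differentiable ℂ f) (n : ℕ) :
    Differentiable ℂ (iteratedDeriv n f) := by
  induction n generalizing f with
  | zero => simpa [iteratedDeriv_zero] using hf
  | succ n ih => rw [iteratedDeriv_succ']; exact ih (diff_deriv hf)

/-- Cauchy estimate for the iterated derivatives of an entire function. -/
lemma cauchy_est {f : ℂ → ℂ} (hf : Differentiable ℂ f) (c : ℂ) {s M : ℝ} (hs : 0 < s)
    (hM : ∀ w ∈ Metric.sphere c s, ‖f w‖ ≤ M) (n : ℕ) :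
    ‖iteratedDeriv n f c‖ ≤ (Nat.factorial n : ℝ) * M / s ^ n := by
  have hps : HasFPowerSeriesOnBall f (cauchyPowerSeries f c s) c ⊤ :=
    hf.hasFPowerSeriesOnBall c (R := ⟨s, hs.le⟩) (by exact_mod_cast hs)
  have h1 : (Nat.factorial n) • (cauchyPowerSeries f c s n fun _ => (1 : ℂ))
      = iteratedFDeriv ℂ n f c (fun _ => 1) := hps.factorial_smul (1 : ℂ) n
  have h2 : ‖iteratedDeriv n f c‖
      = (Nat.factorial n : ℝ) * ‖cauchyPowerSeries f c s n fun _ => (1 : ℂ)‖ := by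
    rw [iteratedDeriv_eq_iteratedFDeriv, ← h1, nsmul_eq_mul, norm_mul, Complex.norm_natCast]
  have h3 : ‖cauchyPowerSeries f c s n fun _ => (1 : ℂ)‖
      ≤ ‖cauchyPowerSeries f c s n‖ := by
    simpa using (cauchyPowerSeries f c s n).le_opNorm (fun _ => (1 : ℂ))
  have hI : (2 * Real.pi)⁻¹ * ∫ θ in (0:ℝ)..2 * Real.pi, ‖f (circleMap c s θ)‖ ≤ M := by
    have hcont : Continuous fun θ : ℝ => ‖f (circleMap c s θ)‖ :=
      (hf.continuous.comp (continuous_circleMap c s)).norm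
    have hb : ∀ θ ∈ Set.Icc (0:ℝ) (2 * Real.pi), ‖f (circleMap c s θ)‖ ≤ M := fun θ _ => by
      simpa using hM _ (circleMap_mem_sphere c hs.le θ)
    have hint : (∫ θ in (0:ℝ)..2 * Real.pi, ‖f (circleMap c s θ)‖)
        ≤ ∫ _θ in (0:ℝ)..2 * Real.pi, M :=
      intervalIntegral.integral_mono_on Real.two_pi_pos.le
        (hcont.intervalIntegrable _ _) intervalIntegrable_const hb
    rw [intervalIntegral.integral_const, smul_eq_mul] at hint
    have h2pi : (0:ℝ) < 2 * Real.pi := Real.two_pi_pos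
    calc (2 * Real.pi)⁻¹ * ∫ θ in (0:ℝ)..2 * Real.pi, ‖f (circleMap c s θ)‖
        ≤ (2 * Real.pi)⁻¹ * ((2 * Real.pi - 0) * M) :=
          mul_le_mul_of_nonneg_left hint (by positivity)
      _ = M := by field_simp; ring
  have h4 : ‖cauchyPowerSeries f c s n‖ ≤ M * (s⁻¹) ^ n := by
    refine (norm_cauchyPowerSeries_le f c s n).trans ?_
    rw [abs_of_pos hs]
    exact mul_le_mul_of_nonneg_right hI (by positivity)
  have hM0 : 0 ≤ M := by
    refine le_trans (norm_nonneg (f (c + s))) (hM _ ?_)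
    simp [Metric.mem_sphere, Complex.dist_eq, abs_of_pos hs]
  calc ‖iteratedDeriv n f c‖
      = (Nat.factorial n : ℝ) * ‖cauchyPowerSeries f c s n fun _ => (1 : ℂ)‖ := h2
    _ ≤ (Nat.factorial n : ℝ) * (M * (s⁻¹) ^ n) :=
        mul_le_mul_of_nonneg_left (h3.trans h4) (by positivity)
    _ = (Nat.factorial n : ℝ) * M / s ^ n := by
        rw [inv_pow]; ring

lemma le_maxMod {φ : ℂ → ℂ} (hc : Continuous φ) {r : ℝ} {w : ℂ}
    (hw : w ∈ Metric.sphere (0 : ℂ) r) : ‖φ w‖ ≤ maxMod φ r :=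
  le_csSup (((isCompact_sphere (0 : ℂ) r).image
    (continuous_norm.comp hc)).bddAbove) ⟨w, hw, rfl⟩

/-- Bounds on the Taylor coefficients of a function of finite exponential type. -/
lemma coeff_bound {φ : ℂ → ℂ} (hφ : Differentiable ℂ φ) (hφτ : expType φ < ⊤) :
    ∃ C B : ℝ, 1 ≤ C ∧ 1 ≤ B ∧ ∀ n, ‖iteratedDeriv n φ 0‖ ≤ C * B ^ n := by
  obtain ⟨τ₀, hτ₀, -⟩ := EReal.lt_iff_exists_real_btwn.mp hφτ
  set τ := max τ₀ 1 with hτdef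
  have hτ1 : (1:ℝ) ≤ τ := le_max_right _ _
  have hτ : expType φ < (τ : EReal) :=
    lt_of_lt_of_le hτ₀ (by exact_mod_cast le_max_left τ₀ 1)
  have hev : ∀ᶠ r in Filter.atTop, elog (maxMod φ r ^ (1 / r)) < (τ : EReal) :=
    Filter.eventually_lt_of_limsup_lt hτ
  obtain ⟨R, hR⟩ := Filter.eventually_atTop.mp hev
  set N := max (Nat.ceil R) 1 with hN
  have key : ∀ n : ℕ, N ≤ n → ‖iteratedDeriv n φ 0‖ ≤ Real.exp τ ^ n := by
    intro n hn
    have hn1 : 1 ≤ n := le_trans (le_max_right _ _) hn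
    have hrpos : (0:ℝ) < n := by exact_mod_cast hn1
    have hrR : R ≤ (n : ℝ) := by
      refine le_trans (Nat.le_ceil R) ?_
      exact_mod_cast le_trans (le_max_left _ _) hn
    have hmax : maxMod φ (n : ℝ) ≤ Real.exp (τ * n) := by
      have h := hR (n : ℝ) hrR
      by_cases h0 : maxMod φ (n : ℝ) = 0
      · rw [h0]; exact (Real.exp_pos _).le
      · have hnn : 0 ≤ maxMod φ (n : ℝ) := by
          obtain ⟨w, hw⟩ :=
            (NormedSpace.sphere_nonempty (x := (0:ℂ)) (r := (n:ℝ))).mpr hrpos.le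
          exact le_trans (norm_nonneg (φ w)) (le_maxMod hφ.continuous hw)
        have hpos : 0 < maxMod φ (n : ℝ) := lt_of_le_of_ne hnn (Ne.symm h0)
        have hrpow : maxMod φ (n : ℝ) ^ (1 / (n : ℝ)) ≠ 0 := by positivity
        rw [elog, if_neg hrpow] at h
        have h' : Real.log (maxMod φ (n : ℝ) ^ (1 / (n : ℝ))) < τ := by exact_mod_cast h
        rw [Real.log_rpow hpos] at h'
        have h'' : Real.log (maxMod φ (n : ℝ)) < τ * n := by
          have h3 := mul_lt_mul_of_pos_left h' hrpos
          rw [← mul_assoc, mul_one_div, div_self hrpos.ne', one_mul] at h3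
          linarith [mul_comm (n : ℝ) τ]
        exact ((Real.log_lt_iff_lt_exp hpos).mp h'').le
    have hce := cauchy_est hφ 0 hrpos
      (fun w hw => le_trans (le_maxMod hφ.continuous hw) hmax) n
    refine hce.trans ?_
    have hfact : ((Nat.factorial n : ℕ) : ℝ) ≤ (n : ℝ) ^ n := by
      exact_mod_cast Nat.factorial_le_pow n
    have hpow : (0:ℝ) < (n : ℝ) ^ n := by positivity
    rw [div_le_iff₀ hpow]
    calc (Nat.factorial n : ℝ) * Real.exp (τ * n)
        ≤ (n : ℝ) ^ n * Real.exp (τ * n) :=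
          mul_le_mul_of_nonneg_right hfact (Real.exp_pos _).le
      _ = Real.exp τ ^ n * (n : ℝ) ^ n := by
          rw [mul_comm τ (n : ℝ), Real.exp_nat_mul]; ring
  refine ⟨1 + ∑ k ∈ Finset.range N, ‖iteratedDeriv k φ 0‖, Real.exp τ, ?_, ?_, ?_⟩
  · have h0 : 0 ≤ ∑ k ∈ Finset.range N, ‖iteratedDeriv k φ 0‖ :=
      Finset.sum_nonneg fun k _ => norm_nonneg _
    linarith
  · nlinarith [Real.add_one_le_exp τ]
  · intro n
    have hsum0 : 0 ≤ ∑ k ∈ Finset.range N, ‖iteratedDeriv k φ 0‖ :=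
      Finset.sum_nonneg fun k _ => norm_nonneg _
    have hBpow : (1:ℝ) ≤ Real.exp τ ^ n := by
      apply one_le_pow₀
      nlinarith [Real.add_one_le_exp τ]
    by_cases hcase : n < N
    · have hle : ‖iteratedDeriv n φ 0‖
          ≤ ∑ k ∈ Finset.range N, ‖iteratedDeriv k φ 0‖ :=
        Finset.single_le_sum (f := fun k => ‖iteratedDeriv k φ 0‖)
          (fun k _ => norm_nonneg _) (Finset.mem_range.mpr hcase)
      calc ‖iteratedDeriv n φ 0‖
          ≤ (1 + ∑ k ∈ Finset.range N, ‖iteratedDeriv k φ 0‖) := by linarith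
        _ ≤ (1 + ∑ k ∈ Finset.range N, ‖iteratedDeriv k φ 0‖) * Real.exp τ ^ n :=
            le_mul_of_one_le_right (by linarith) hBpow
    · calc ‖iteratedDeriv n φ 0‖ ≤ Real.exp τ ^ n := key n (not_lt.mp hcase)
        _ ≤ (1 + ∑ k ∈ Finset.range N, ‖iteratedDeriv k φ 0‖) * Real.exp τ ^ n :=
            le_mul_of_one_le_left (by positivity) (by linarith)

/-- Cauchy estimate combined with the `Exp(K)` growth bound. -/
lemma deriv_est {K : Set ℂ} (hKne : K.Nonempty) (hKcomp : IsCompact K) {Rk : ℝ}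
    (hRk : ∀ u ∈ K, ‖u‖ ≤ Rk) {f : ℂ → ℂ} (hf : Differentiable ℂ f)
    {m : ℕ} (hm : 1 ≤ m) {A : ℝ} (hA0 : 0 ≤ A)
    (hA : ∀ z, ‖f z‖ ≤ A * Real.exp (suppFn K z + ‖z‖ / (m : ℝ)))
    {s : ℝ} (hs : 0 < s) (n : ℕ) (z : ℂ) :
    ‖iteratedDeriv n f z‖ ≤
      ((Nat.factorial n : ℝ) / s ^ n) *
        (A * Real.exp (Rk * s + s / (m : ℝ)) *
          Real.exp (suppFn K z + ‖z‖ / (m : ℝ))) := by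
  have hm0 : (0:ℝ) < (m : ℝ) := by exact_mod_cast hm
  have hM : ∀ w ∈ Metric.sphere z s, ‖f w‖ ≤
      A * Real.exp (Rk * s + s / (m : ℝ)) *
        Real.exp (suppFn K z + ‖z‖ / (m : ℝ)) := by
    intro w hw
    have hwz : ‖w - z‖ = s := by
      simpa [Complex.dist_eq] using (Metric.mem_sphere.mp hw)
    have h1 : suppFn K w ≤ suppFn K z + Rk * s := by
      have := suppFn_sub hKne hKcomp hRk z w
      rwa [hwz] at this
    have h2 : ‖w‖ ≤ ‖z‖ + s := by
      calc ‖w‖ = ‖z + (w - z)‖ := by rw [add_sub_cancel]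
        _ ≤ ‖z‖ + ‖w - z‖ := norm_add_le _ _
        _ = ‖z‖ + s := by rw [hwz]
    calc ‖f w‖ ≤ A * Real.exp (suppFn K w + ‖w‖ / (m : ℝ)) := hA w
      _ ≤ A * Real.exp ((suppFn K z + Rk * s) + (‖z‖ + s) / (m : ℝ)) := by
          refine mul_le_mul_of_nonneg_left (Real.exp_le_exp.mpr ?_) hA0
          have h3 : ‖w‖ / (m : ℝ) ≤ (‖z‖ + s) / (m : ℝ) := by
            gcongr
          linarith
      _ = A * Real.exp (Rk * s + s / (m : ℝ)) *
            Real.exp (suppFn K z + ‖z‖ / (m : ℝ)) := by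
          rw [mul_assoc, ← Real.exp_add]
          congr 1
          field_simp
          ring
  have hce := cauchy_est hf z hs hM n
  calc ‖iteratedDeriv n f z‖
      ≤ (Nat.factorial n : ℝ) *
          (A * Real.exp (Rk * s + s / (m : ℝ)) *
            Real.exp (suppFn K z + ‖z‖ / (m : ℝ))) / s ^ n := hce
    _ = ((Nat.factorial n : ℝ) / s ^ n) *
          (A * Real.exp (Rk * s + s / (m : ℝ)) *
            Real.exp (suppFn K z + ‖z‖ / (m : ℝ))) := by ring

/-- Termwise and pointwise bounds for `φ(D) f`. -/
lemma phiD_pointwise {K : Set ℂ} (hKne : K.Nonempty) (hKcomp : IsCompact K) {Rk : ℝ}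
    (hRk : ∀ u ∈ K, ‖u‖ ≤ Rk) {φ : ℂ → ℂ} {C B : ℝ} (hC : 1 ≤ C) (hB : 1 ≤ B)
    (hcoef : ∀ n, ‖iteratedDeriv n φ 0‖ ≤ C * B ^ n)
    {f : ℂ → ℂ} (hf : Differentiable ℂ f) {m : ℕ} (hm : 1 ≤ m) {A : ℝ} (hA0 : 0 ≤ A)
    (hA : ∀ z, ‖f z‖ ≤ A * Real.exp (suppFn K z + ‖z‖ / (m : ℝ))) :
    (∀ n z, ‖(iteratedDeriv n φ 0 / (Nat.factorial n : ℂ)) * iteratedDeriv n f z‖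
        ≤ C * (A * Real.exp (Rk * (2 * B) + 2 * B / (m : ℝ)) *
            Real.exp (suppFn K z + ‖z‖ / (m : ℝ))) * (1 / 2) ^ n) ∧
    (∀ z, ‖phiD φ f z‖ ≤
      2 * C * (A * Real.exp (Rk * (2 * B) + 2 * B / (m : ℝ))) *
        Real.exp (suppFn K z + ‖z‖ / (m : ℝ))) := by
  have hBpos : (0:ℝ) < B := lt_of_lt_of_le one_pos hB
  have hs : (0:ℝ) < 2 * B := by linarith
  have hterm : ∀ n z,
      ‖(iteratedDeriv n φ 0 / (Nat.factorial n : ℂ)) * iteratedDeriv n f z‖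
        ≤ C * (A * Real.exp (Rk * (2 * B) + 2 * B / (m : ℝ)) *
            Real.exp (suppFn K z + ‖z‖ / (m : ℝ))) * (1 / 2) ^ n := by
    intro n z
    have hfac : (0:ℝ) < (Nat.factorial n : ℝ) := by exact_mod_cast Nat.factorial_pos n
    have hd := deriv_est hKne hKcomp hRk hf hm hA0 hA hs n z
    have habs : ‖(iteratedDeriv n φ 0 / (Nat.factorial n : ℂ)) * iteratedDeriv n f z‖
        = ‖iteratedDeriv n φ 0‖ / (Nat.factorial n : ℝ) *
            ‖iteratedDeriv n f z‖ := by
      rw [norm_mul, norm_div, Complex.norm_natCast]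
    rw [habs]
    have h1 : ‖iteratedDeriv n φ 0‖ / (Nat.factorial n : ℝ)
        ≤ C * B ^ n / (Nat.factorial n : ℝ) := by
      gcongr
      exact hcoef n
    set E := A * Real.exp (Rk * (2 * B) + 2 * B / (m : ℝ)) *
        Real.exp (suppFn K z + ‖z‖ / (m : ℝ)) with hE
    have hE0 : 0 ≤ E := by
      apply mul_nonneg (mul_nonneg hA0 (Real.exp_pos _).le) (Real.exp_pos _).le
    have hBn : (B:ℝ) ^ n ≠ 0 := by positivity
    calc ‖iteratedDeriv n φ 0‖ / (Nat.factorial n : ℝ) *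
          ‖iteratedDeriv n f z‖
        ≤ (C * B ^ n / (Nat.factorial n : ℝ)) * (((Nat.factorial n : ℝ) / (2 * B) ^ n) * E) := by
          apply mul_le_mul h1 hd (norm_nonneg _)
          positivity
      _ = (C * E) * (B ^ n / (2 * B) ^ n) := by
          field_simp
      _ = (C * E) * (1 / 2) ^ n := by
          congr 1
          rw [div_pow, one_pow, mul_pow, mul_comm ((2:ℝ) ^ n) (B ^ n), ← div_div,
            div_self hBn]
      _ = C * E * (1 / 2) ^ n := rfl
  refine ⟨hterm, fun z => ?_⟩
  set E := A * Real.exp (Rk * (2 * B) + 2 * B / (m : ℝ)) *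
      Real.exp (suppFn K z + ‖z‖ / (m : ℝ)) with hE
  have hE0 : 0 ≤ E :=
    mul_nonneg (mul_nonneg hA0 (Real.exp_pos _).le) (Real.exp_pos _).le
  have hgeo : Summable (fun n : ℕ => C * E * (1 / 2) ^ n) :=
    (summable_geometric_of_lt_one (by norm_num) (by norm_num)).mul_left _
  have hsum : Summable (fun n : ℕ =>
      ‖(iteratedDeriv n φ 0 / (Nat.factorial n : ℂ)) * iteratedDeriv n f z‖) := by
    refine Summable.of_nonneg_of_le (fun n => norm_nonneg _) (fun n => ?_) hgeo
    simpa using hterm n z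
  have hnorm : ‖phiD φ f z‖ ≤
      ∑' n : ℕ, ‖(iteratedDeriv n φ 0 / (Nat.factorial n : ℂ)) * iteratedDeriv n f z‖ := by
    exact norm_tsum_le_tsum_norm hsum
  refine hnorm.trans ?_
  have hle : ∑' n : ℕ, ‖(iteratedDeriv n φ 0 / (Nat.factorial n : ℂ)) * iteratedDeriv n f z‖
      ≤ ∑' n : ℕ, C * E * (1 / 2) ^ n := by
    refine hsum.tsum_le_tsum (fun n => ?_) hgeo
    simpa using hterm n z
  refine hle.trans ?_
  rw [tsum_mul_left, tsum_geometric_of_lt_one (by norm_num) (by norm_num)]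
  have : ((1:ℝ) - 1 / 2)⁻¹ = 2 := by norm_num
  rw [this]
  calc C * E * 2 = 2 * C * (A * Real.exp (Rk * (2 * B) + 2 * B / (m : ℝ))) *
      Real.exp (suppFn K z + ‖z‖ / (m : ℝ)) := by rw [hE]; ring
    _ ≤ _ := le_rfl

/-- `φ(D) f` is entire. -/
lemma phiD_diff {K : Set ℂ} (hKne : K.Nonempty) (hKcomp : IsCompact K) {Rk : ℝ}
    (hRk0 : 0 ≤ Rk) (hRk : ∀ u ∈ K, ‖u‖ ≤ Rk) {φ : ℂ → ℂ} {C B : ℝ}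
    (hC : 1 ≤ C) (hB : 1 ≤ B)
    (hcoef : ∀ n, ‖iteratedDeriv n φ 0‖ ≤ C * B ^ n)
    {f : ℂ → ℂ} (hf : Differentiable ℂ f) {m : ℕ} (hm : 1 ≤ m) {A : ℝ} (hA0 : 0 ≤ A)
    (hA : ∀ z, ‖f z‖ ≤ A * Real.exp (suppFn K z + ‖z‖ / (m : ℝ))) :
    Differentiable ℂ (phiD φ f) := by
  have hterm := (phiD_pointwise hKne hKcomp hRk hC hB hcoef hf hm hA0 hA).1
  have hm1 : (1:ℝ) ≤ (m : ℝ) := by exact_mod_cast hm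
  intro z0
  set Rb : ℝ := ‖z0‖ + 1 with hRb
  have hRb0 : 0 < Rb := by positivity
  set D : ℝ := C * (A * Real.exp (Rk * (2 * B) + 2 * B / (m : ℝ)) *
      Real.exp (Rk * Rb + Rb)) with hD
  have hb : ∀ (n : ℕ), ∀ z ∈ Metric.ball (0:ℂ) Rb,
      ‖(iteratedDeriv n φ 0 / (Nat.factorial n : ℂ)) * iteratedDeriv n f z‖
        ≤ D * (1 / 2) ^ n := by
    intro n z hz
    have hz' : ‖z‖ ≤ Rb := by
      have := Metric.mem_ball.mp hz
      rw [Complex.dist_eq, sub_zero] at this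
      exact this.le
    have hsup : suppFn K z ≤ Rk * Rb :=
      le_trans (suppFn_le_mul hKne hRk z) (mul_le_mul_of_nonneg_left hz' hRk0)
    have hdiv : ‖z‖ / (m : ℝ) ≤ Rb :=
      le_trans (div_le_self (norm_nonneg z) hm1) hz'
    have h1 := hterm n z
    refine h1.trans ?_
    rw [hD]
    apply mul_le_mul_of_nonneg_right _ (by positivity)
    apply mul_le_mul_of_nonneg_left _ (by linarith : (0:ℝ) ≤ C)
    apply mul_le_mul_of_nonneg_left _ (mul_nonneg hA0 (Real.exp_pos _).le)
    exact Real.exp_le_exp.mpr (add_le_add hsup hdiv)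
  have hu : Summable (fun n : ℕ => D * (1 / 2) ^ n) :=
    (summable_geometric_of_lt_one (by norm_num) (by norm_num)).mul_left _
  have htuo := tendstoUniformlyOn_tsum hu
    (f := fun n z => (iteratedDeriv n φ 0 / (Nat.factorial n : ℂ)) * iteratedDeriv n f z)
    (s := Metric.ball (0:ℂ) Rb) (fun n z hz => hb n z hz)
  have hdiffsums : ∀ t : Finset ℕ, DifferentiableOn ℂ
      (fun z => ∑ n ∈ t, (iteratedDeriv n φ 0 / (Nat.factorial n : ℂ)) * iteratedDeriv n f z)
      (Metric.ball (0:ℂ) Rb) := by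
    intro t
    exact (Differentiable.fun_sum fun i _ => (diff_iter hf i).const_mul _).differentiableOn
  have hDiffOn : DifferentiableOn ℂ
      (fun z => ∑' n : ℕ, (iteratedDeriv n φ 0 / (Nat.factorial n : ℂ)) * iteratedDeriv n f z)
      (Metric.ball (0:ℂ) Rb) :=
    htuo.tendstoLocallyUniformlyOn.differentiableOn
      (Filter.Eventually.of_forall hdiffsums) Metric.isOpen_ball
  have hz0 : z0 ∈ Metric.ball (0:ℂ) Rb := by
    rw [Metric.mem_ball, Complex.dist_eq, sub_zero, hRb]
    linarith
  exact (hDiffOn.differentiableAt (Metric.isOpen_ball.mem_nhds hz0))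

end Aux

/-- `φ(D)` is a continuous self-map of `Exp(K)`. -/
theorem stmt_6 (K : Set ℂ) (hKne : K.Nonempty) (hKcomp : IsCompact K) (hKconv : Convex ℝ K)
    (φ : ℂ → ℂ) (hφ : Differentiable ℂ φ) (hφτ : expType φ < ⊤) :
    (∀ f : ℂ → ℂ, memExp K f → memExp K (phiD φ f)) ∧
    (∀ n : ℕ, 1 ≤ n → ∃ m : ℕ, 1 ≤ m ∧ ∃ C : ℝ, 0 < C ∧
      ∀ f : ℂ → ℂ, memExp K f → expNorm K n (phiD φ f) ≤ C * expNorm K m f) := by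
  obtain ⟨C₀, B, hC₀, hB, hcoef⟩ := coeff_bound hφ hφτ
  obtain ⟨Rk, hRkball⟩ := hKcomp.isBounded.subset_closedBall (0 : ℂ)
  have hRk : ∀ u ∈ K, ‖u‖ ≤ Rk := fun u hu => by
    have := Metric.mem_closedBall.mp (hRkball hu)
    rwa [Complex.dist_eq, sub_zero] at this
  obtain ⟨u₀, hu₀⟩ := hKne
  have hRk0 : 0 ≤ Rk := le_trans (norm_nonneg u₀) (hRk u₀ hu₀)
  have hKne' : K.Nonempty := ⟨u₀, hu₀⟩
  -- growth bound from membership in Exp(K)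
  have hbd : ∀ f : ℂ → ℂ, memExp K f → ∀ m : ℕ, 1 ≤ m →
      0 ≤ expNorm K m f ∧ ∀ z, ‖f z‖ ≤
        expNorm K m f * Real.exp (suppFn K z + ‖z‖ / (m : ℝ)) := by
    intro f hf m hm
    have hBdd := hf.2 m hm
    have hle : ∀ z, ‖f z‖ * Real.exp (-suppFn K z - ‖z‖ / (m : ℝ))
        ≤ expNorm K m f := fun z => le_csSup hBdd ⟨z, rfl⟩
    constructor
    · exact le_trans (by positivity) (hle 0)
    · intro z
      have h := hle z
      rw [show -suppFn K z - ‖z‖ / (m : ℝ)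
        = -(suppFn K z + ‖z‖ / (m : ℝ)) by ring] at h
      exact exp_shift h
  constructor
  · intro f hfK
    obtain ⟨hA01, hA1⟩ := hbd f hfK 1 le_rfl
    refine ⟨phiD_diff hKne' hKcomp hRk0 hRk hC₀ hB hcoef hfK.1 le_rfl hA01 hA1, ?_⟩
    intro n hn
    obtain ⟨hA0n, hAn⟩ := hbd f hfK n hn
    have hpt := (phiD_pointwise hKne' hKcomp hRk hC₀ hB hcoef hfK.1 hn hA0n hAn).2
    refine ⟨2 * C₀ * (expNorm K n f *
      Real.exp (Rk * (2 * B) + 2 * B / (n : ℝ))), ?_⟩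
    rintro x ⟨z, rfl⟩
    dsimp only
    rw [show -suppFn K z - ‖z‖ / (n : ℝ)
      = -(suppFn K z + ‖z‖ / (n : ℝ)) by ring]
    exact exp_shift' (hpt z)
  · intro n hn
    refine ⟨n, hn, 2 * C₀ * Real.exp (Rk * (2 * B) + 2 * B / (n : ℝ)), ?_, ?_⟩
    · have h1 : (0:ℝ) < C₀ := lt_of_lt_of_le one_pos hC₀
      positivity
    · intro f hfK
      obtain ⟨hA0, hA⟩ := hbd f hfK n hn
      have hpt := (phiD_pointwise hKne' hKcomp hRk hC₀ hB hcoef hfK.1 hn hA0 hA).2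
      apply csSup_le (Set.range_nonempty _)
      rintro x ⟨z, rfl⟩
      dsimp only
      have h2 : ‖phiD φ f z‖ ≤
          (2 * C₀ * Real.exp (Rk * (2 * B) + 2 * B / (n : ℝ)) * expNorm K n f) *
            Real.exp (suppFn K z + ‖z‖ / (n : ℝ)) := by
        refine (hpt z).trans (le_of_eq ?_)
        ring
      rw [show -suppFn K z - ‖z‖ / (n : ℝ)
        = -(suppFn K z + ‖z‖ / (n : ℝ)) by ring]
      exact exp_shift' h2
end

section
/- Let K ⊆ ℂ be a nonempty compact convex set, let φ be an entire function of exponential type, and let f ∈ Exp(K). Then the derivative of Φ_φ f equals Φ_φ applied to φ(D)f: (Φ_φ f)' = Φ_φ(φ(D)f) as entire functions; that is, the differentiation operator D is quasi-conjugated to φ(D) by Φ_φ. -/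
open Filter Complex Set

lemma my_cauchy_est {f : ℂ → ℂ} (hf : Differentiable ℂ f) (c : ℂ) {r M : ℝ} (hr : 0 < r)
    (hM : ∀ w ∈ Metric.sphere c r, ‖f w‖ ≤ M) (n : ℕ) :
    ‖iteratedDeriv n f c‖ ≤ n.factorial * M / r ^ n := by
  have hM0 : 0 ≤ M := by
    refine le_trans (norm_nonneg _) (hM (c + r) ?_)
    simp [Metric.mem_sphere, dist_eq_norm, abs_of_pos hr]
  set R : NNReal := ⟨r, hr.le⟩ with hRdef
  have hRr : (R : ℝ) = r := rfl
  have h := hf.hasFPowerSeriesOnBall c (R := R) (by exact_mod_cast hr)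
  have h1 : (n.factorial : ℕ) • (cauchyPowerSeries f c R n fun _ => (1:ℂ))
      = iteratedDeriv n f c := by
    rw [iteratedDeriv_eq_iteratedFDeriv]
    exact h.factorial_smul (1:ℂ) n
  have h2 : ‖iteratedDeriv n f c‖
      ≤ (n.factorial : ℝ) * ‖cauchyPowerSeries f c R n‖ := by
    rw [← h1, nsmul_eq_mul]
    rw [norm_mul, Complex.norm_natCast]
    have := (cauchyPowerSeries f c R n).le_opNorm (fun _ => (1:ℂ))
    simp only [norm_one, Finset.prod_const_one, mul_one] at this
    exact mul_le_mul_of_nonneg_left this (by positivity)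
  have h3 : ‖cauchyPowerSeries f c R n‖ ≤ M * (r⁻¹) ^ n := by
    refine (norm_cauchyPowerSeries_le f c R n).trans ?_
    have hint : (∫ θ : ℝ in (0)..2 * Real.pi, ‖f (circleMap c R θ)‖) ≤ 2 * Real.pi * M := by
      have hle : ∀ θ ∈ Set.Icc (0:ℝ) (2*Real.pi), ‖f (circleMap c R θ)‖ ≤ M := by
        intro θ _
        exact hM _ (by simpa [hRr] using circleMap_mem_sphere c hr.le θ)
      calc (∫ θ : ℝ in (0)..2 * Real.pi, ‖f (circleMap c R θ)‖)
          ≤ ∫ _ : ℝ in (0)..2 * Real.pi, M := by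
            apply intervalIntegral.integral_mono_on Real.two_pi_pos.le
            · exact ((hf.continuous.comp (continuous_circleMap c R)).norm).intervalIntegrable _ _
            · exact intervalIntegrable_const
            · exact hle
        _ = 2 * Real.pi * M := by simp [mul_comm]
    have habs : |(R:ℝ)| = r := by rw [hRr, abs_of_pos hr]
    rw [habs]
    calc (2 * Real.pi)⁻¹ * (∫ θ : ℝ in (0)..2 * Real.pi, ‖f (circleMap c R θ)‖) * (r⁻¹) ^ n
        ≤ (2 * Real.pi)⁻¹ * (2 * Real.pi * M) * (r⁻¹) ^ n := by
          have : (0:ℝ) < 2 * Real.pi := Real.two_pi_pos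
          gcongr
      _ = M * (r⁻¹) ^ n := by
          field_simp
  calc ‖iteratedDeriv n f c‖ ≤ (n.factorial : ℝ) * (M * (r⁻¹) ^ n) :=
        h2.trans (by
          exact mul_le_mul_of_nonneg_left h3 (by positivity))
    _ = n.factorial * M / r ^ n := by
        rw [inv_pow]
        ring

lemma my_growth {φ : ℂ → ℂ} (hφ : Differentiable ℂ φ) (hτ : expType φ < ⊤) :
    ∃ C τ : ℝ, 1 ≤ C ∧ 0 ≤ τ ∧ ∀ z : ℂ, ‖φ z‖ ≤ C * Real.exp (τ * ‖z‖) := by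
  obtain ⟨b, hb1, -⟩ := EReal.exists_between_coe_real hτ
  have hev : ∀ᶠ r : ℝ in atTop, elog (maxMod φ r ^ (1 / r)) < (b : EReal) :=
    eventually_lt_of_limsup_lt hb1
  obtain ⟨r₀, hr₀⟩ := hev.exists_forall_of_atTop
  set r₁ : ℝ := max r₀ 1 with hr₁def
  have hr₁pos : (0:ℝ) < r₁ := lt_of_lt_of_le one_pos (le_max_right _ _)
  -- bound for large |z|
  have hbig : ∀ z : ℂ, r₁ ≤ ‖z‖ → ‖φ z‖ ≤ Real.exp (b * ‖z‖) := by
    intro z hz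
    set r : ℝ := ‖z‖ with hrdef
    have hrpos : 0 < r := lt_of_lt_of_le hr₁pos hz
    have h2 : elog (maxMod φ r ^ (1 / r)) < (b : EReal) :=
      hr₀ r (le_trans (le_max_left _ _) hz)
    have hmem : ‖φ z‖ ∈ (fun w => ‖φ w‖) '' Metric.sphere (0 : ℂ) r :=
      ⟨z, by simp [hrdef, Metric.mem_sphere, dist_eq_norm], rfl⟩
    have hbdd : BddAbove ((fun w => ‖φ w‖) '' Metric.sphere (0 : ℂ) r) :=
      ((isCompact_sphere 0 r).image (continuous_norm.comp hφ.continuous)).bddAbove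
    have hfz : ‖φ z‖ ≤ maxMod φ r := le_csSup hbdd hmem
    have hmm0 : 0 ≤ maxMod φ r := le_trans (norm_nonneg _) hfz
    rcases eq_or_lt_of_le hmm0 with heq | hlt
    · exact le_trans hfz (heq ▸ (Real.exp_pos _).le)
    · have hx : (0:ℝ) < maxMod φ r ^ (1 / r) := Real.rpow_pos_of_pos hlt _
      rw [elog, if_neg hx.ne'] at h2
      have hlog : Real.log (maxMod φ r ^ (1 / r)) < b := by exact_mod_cast h2
      have hxe : maxMod φ r ^ (1 / r) < Real.exp b := (Real.log_lt_iff_lt_exp hx).mp hlog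
      have hrne : r ≠ 0 := hrpos.ne'
      have key : maxMod φ r ≤ Real.exp (b * r) := by
        have h4 : (maxMod φ r ^ (1 / r)) ^ r ≤ (Real.exp b) ^ r :=
          Real.rpow_le_rpow (Real.rpow_nonneg hmm0 _) hxe.le hrpos.le
        have h5 : (maxMod φ r ^ (1 / r)) ^ r = maxMod φ r := by
          rw [← Real.rpow_mul hmm0]
          rw [one_div, inv_mul_cancel₀ hrne, Real.rpow_one]
        rw [h5] at h4
        rw [Real.exp_mul]
        exact h4
      exact le_trans hfz key
  -- bound on the compact part
  obtain ⟨C₀, hC₀⟩ := (isCompact_closedBall (0:ℂ) r₁).exists_bound_of_continuousOn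
    (hφ.continuous.continuousOn)
  refine ⟨max C₀ 1, max b 0, le_max_right _ _, le_max_right _ _, fun z => ?_⟩
  have hexp1 : (1:ℝ) ≤ Real.exp (max b 0 * ‖z‖) := by
    apply Real.one_le_exp
    positivity
  rcases le_or_gt (‖z‖) r₁ with hle | hgt
  · have := hC₀ z (by simpa [Metric.mem_closedBall, dist_eq_norm] using hle)
    calc ‖φ z‖ ≤ C₀ := this
      _ ≤ max C₀ 1 := le_max_left _ _
      _ ≤ max C₀ 1 * Real.exp (max b 0 * ‖z‖) := by
          nlinarith [le_max_right C₀ 1]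
  · have h5 := hbig z hgt.le
    calc ‖φ z‖ ≤ Real.exp (b * ‖z‖) := h5
      _ ≤ Real.exp (max b 0 * ‖z‖) := by
          apply Real.exp_le_exp.2
          have : (0:ℝ) ≤ ‖z‖ := norm_nonneg z
          nlinarith [le_max_left b 0]
      _ ≤ max C₀ 1 * Real.exp (max b 0 * ‖z‖) := by
          nlinarith [Real.exp_pos (max b 0 * ‖z‖), le_max_right C₀ 1]

lemma my_coeff {φ : ℂ → ℂ} (hφ : Differentiable ℂ φ) {C τ : ℝ} (hC : 1 ≤ C) (hτ : 0 ≤ τ)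
    (h : ∀ z, ‖φ z‖ ≤ C * Real.exp (τ * ‖z‖)) :
    ∀ k : ℕ, ‖iteratedDeriv k φ 0‖ ≤ C * (Real.exp τ) ^ k := by
  intro k
  rcases Nat.eq_zero_or_pos k with rfl | hk
  · simpa [iteratedDeriv_zero] using (h 0).trans (by simp)
  · have hkpos : (0:ℝ) < (k:ℝ) := by exact_mod_cast hk
    have h1 := my_cauchy_est hφ 0 (r := (k:ℝ)) (M := C * Real.exp (τ * k)) hkpos ?_ k
    · have hfac : (k.factorial : ℝ) ≤ (k:ℝ) ^ k := by exact_mod_cast Nat.factorial_le_pow k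
      have hM0 : (0:ℝ) ≤ C * Real.exp (τ * k) := by positivity
      have h2 : (k.factorial : ℝ) * (C * Real.exp (τ * k)) / (k:ℝ) ^ k
          ≤ C * Real.exp (τ * k) := by
        rw [div_le_iff₀ (by positivity)]
        nlinarith
      have h3 : C * Real.exp (τ * k) = C * (Real.exp τ) ^ k := by
        rw [mul_comm τ (k:ℝ), Real.exp_nat_mul]
      exact h1.trans (h3 ▸ h2)
    · intro w hw
      have : ‖w‖ = (k:ℝ) := by
        simpa [Metric.mem_sphere, dist_eq_norm] using hw
      rw [← this]
      exact h w


section Supp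

variable {K : Set ℂ} (hKne : K.Nonempty) {k₀ : ℝ} (hk₀ : 0 ≤ k₀)
  (hK0 : ∀ u ∈ K, ‖u‖ ≤ k₀)

include hk₀ hK0 in
lemma supp_le (z : ℂ) : suppFn K z ≤ k₀ * ‖z‖ := by
  apply Real.sSup_le
  · rintro x ⟨u, hu, rfl⟩
    calc (z * u).re ≤ ‖z * u‖ := Complex.re_le_norm _
      _ = ‖z‖ * ‖u‖ := norm_mul _ _
      _ ≤ ‖z‖ * k₀ := by
          exact mul_le_mul_of_nonneg_left (hK0 u hu) (norm_nonneg _)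
      _ = k₀ * ‖z‖ := mul_comm _ _
  · positivity

include hk₀ hK0 in
lemma supp_bdd (z : ℂ) : BddAbove ((fun u => (z * u).re) '' K) := by
  refine ⟨k₀ * ‖z‖, ?_⟩
  rintro x ⟨u, hu, rfl⟩
  calc (z * u).re ≤ ‖z * u‖ := Complex.re_le_norm _
    _ = ‖z‖ * ‖u‖ := norm_mul _ _
    _ ≤ ‖z‖ * k₀ := mul_le_mul_of_nonneg_left (hK0 u hu) (norm_nonneg _)
    _ = k₀ * ‖z‖ := mul_comm _ _

include hKne hk₀ hK0 in
lemma supp_shift (z w : ℂ) : suppFn K w ≤ suppFn K z + k₀ * ‖w - z‖ := by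
  apply csSup_le (hKne.image _)
  rintro x ⟨u, hu, rfl⟩
  have hsplit : w * u = z * u + (w - z) * u := by ring
  show (w * u).re ≤ _
  rw [hsplit, Complex.add_re]
  have h1 : (z * u).re ≤ suppFn K z := le_csSup (supp_bdd hk₀ hK0 z) ⟨u, hu, rfl⟩
  have h2 : ((w - z) * u).re ≤ k₀ * ‖w - z‖ := by
    calc ((w - z) * u).re ≤ ‖(w - z) * u‖ := Complex.re_le_norm _
      _ = ‖w - z‖ * ‖u‖ := norm_mul _ _
      _ ≤ ‖w - z‖ * k₀ := mul_le_mul_of_nonneg_left (hK0 u hu) (norm_nonneg _)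
      _ = k₀ * ‖w - z‖ := mul_comm _ _
  linarith

end Supp

lemma my_key {K : Set ℂ} (hKne : K.Nonempty) {k₀ : ℝ} (hk₀ : 0 ≤ k₀)
    (hK0 : ∀ u ∈ K, ‖u‖ ≤ k₀)
    {φ : ℂ → ℂ} {Cφ β : ℝ} (hCφ : 0 ≤ Cφ) (hβ : 1 ≤ β)
    (hD : ∀ k, ‖iteratedDeriv k φ 0‖ ≤ Cφ * β ^ k)
    {M : ℝ} (hM : 0 ≤ M) {g : ℂ → ℂ} (hg : Differentiable ℂ g)
    (hgb : ∀ z, ‖g z‖ ≤ M * Real.exp (suppFn K z + ‖z‖)) :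
    Differentiable ℂ (phiD φ g) ∧
      ∀ z, ‖phiD φ g z‖ ≤
        (2 * Cφ * Real.exp ((k₀ + 1) * (2 * β))) * M * Real.exp (suppFn K z + ‖z‖) := by
  have hβ0 : (0:ℝ) < β := lt_of_lt_of_le one_pos hβ
  set ρ : ℝ := 2 * β with hρdef
  have hρ0 : (0:ℝ) < ρ := by positivity
  -- Cauchy estimate for iterated derivatives of g
  have hCau : ∀ (z : ℂ) (k : ℕ), ‖iteratedDeriv k g z‖
      ≤ k.factorial * (M * Real.exp (suppFn K z + ‖z‖ + (k₀ + 1) * ρ)) / ρ ^ k := by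
    intro z k
    apply my_cauchy_est hg z hρ0 ?_ k
    intro w hw
    have hwz : ‖w - z‖ = ρ := by
      simpa [Metric.mem_sphere, dist_eq_norm] using hw
    have h1 : suppFn K w ≤ suppFn K z + k₀ * ρ := by
      have := supp_shift hKne hk₀ hK0 z w
      rwa [hwz] at this
    have h2 : ‖w‖ ≤ ‖z‖ + ρ := by
      calc ‖w‖ = ‖z + (w - z)‖ := by ring_nf
        _ ≤ ‖z‖ + ‖w - z‖ := norm_add_le _ _
        _ = ‖z‖ + ρ := by rw [hwz]
    calc ‖g w‖ ≤ M * Real.exp (suppFn K w + ‖w‖) := hgb w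
      _ ≤ M * Real.exp (suppFn K z + ‖z‖ + (k₀ + 1) * ρ) := by
          apply mul_le_mul_of_nonneg_left _ hM
          apply Real.exp_le_exp.2
          nlinarith
  -- term bound
  have termB : ∀ (z : ℂ) (k : ℕ),
      ‖(iteratedDeriv k φ 0 / (k.factorial : ℂ)) * iteratedDeriv k g z‖
      ≤ (Cφ * (M * Real.exp (suppFn K z + ‖z‖ + (k₀ + 1) * ρ))) * (1/2 : ℝ) ^ k := by
    intro z k
    have hkf : (0:ℝ) < (k.factorial : ℝ) := by exact_mod_cast k.factorial_pos
    set E : ℝ := M * Real.exp (suppFn K z + ‖z‖ + (k₀ + 1) * ρ) with hEdef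
    have hE0 : 0 ≤ E := by positivity
    rw [norm_mul, norm_div, Complex.norm_natCast]
    have step1 : ‖iteratedDeriv k φ 0‖ / (k.factorial : ℝ)
        * ‖iteratedDeriv k g z‖
        ≤ (Cφ * β ^ k / (k.factorial : ℝ)) * ((k.factorial : ℝ) * E / ρ ^ k) := by
      apply mul_le_mul
      · gcongr
        exact hD k
      · exact hCau z k
      · exact norm_nonneg _
      · positivity
    have step2 : (Cφ * β ^ k / (k.factorial : ℝ)) * ((k.factorial : ℝ) * E / ρ ^ k)
        = (Cφ * E) * (1/2 : ℝ) ^ k := by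
      have e1 : ((1:ℝ)/2) ^ k = β ^ k / ρ ^ k := by
        rw [← div_pow]
        congr 1
        rw [hρdef]
        field_simp
      rw [e1]
      field_simp
    exact step1.trans (le_of_eq step2)
  -- summability of each series
  have hSumm : ∀ z : ℂ, Summable (fun k : ℕ =>
      (iteratedDeriv k φ 0 / (k.factorial : ℂ)) * iteratedDeriv k g z) := by
    intro z
    apply Summable.of_norm_bounded (summable_geometric_two.mul_left _) (termB z)
  constructor
  · -- differentiability
    intro z₀
    set R : ℝ := ‖z₀‖ + 1 with hRdef
    have hdiffOn : DifferentiableOn ℂ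
        (fun w : ℂ => ∑' k : ℕ, (iteratedDeriv k φ 0 / (k.factorial : ℂ)) * iteratedDeriv k g w)
        (Metric.ball (0:ℂ) R) := by
      apply differentiableOn_tsum_of_summable_norm
        (u := fun k : ℕ => (Cφ * (M * Real.exp ((k₀ + 1) * R + (k₀ + 1) * ρ))) * (1/2 : ℝ) ^ k)
      · exact summable_geometric_two.mul_left _
      · intro k
        apply DifferentiableOn.mul
        · exact differentiableOn_const _
        · exact (hg.contDiff.differentiable_iteratedDeriv k
            (by exact_mod_cast WithTop.coe_lt_top _)).differentiableOn
      · exact Metric.isOpen_ball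
      · intro k w hw
        have hwR : ‖w‖ ≤ R := by
          have := Metric.mem_ball.mp hw
          simp only [dist_zero_right] at this
          exact le_of_lt (by simpa using this)
        refine (termB w k).trans ?_
        have h1 : suppFn K w + ‖w‖ ≤ (k₀ + 1) * R := by
          have := supp_le hk₀ hK0 w
          nlinarith [norm_nonneg w]
        gcongr
    have hz₀ : z₀ ∈ Metric.ball (0:ℂ) R := by
      simp only [Metric.mem_ball, dist_zero_right, hRdef]
      simpa using lt_add_one (‖z₀‖)
    exact hdiffOn.differentiableAt (Metric.isOpen_ball.mem_nhds hz₀)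
  · -- bound
    intro z
    have hnorm : ∀ k : ℕ, ‖(iteratedDeriv k φ 0 / (k.factorial : ℂ)) * iteratedDeriv k g z‖
        ≤ (Cφ * (M * Real.exp (suppFn K z + ‖z‖ + (k₀ + 1) * ρ))) * (1/2 : ℝ) ^ k :=
      termB z
    have hsumm2 : Summable (fun k : ℕ =>
        ‖(iteratedDeriv k φ 0 / (k.factorial : ℂ)) * iteratedDeriv k g z‖) :=
      Summable.of_nonneg_of_le (fun _ => norm_nonneg _) hnorm (summable_geometric_two.mul_left _)
    calc ‖phiD φ g z‖
        ≤ ∑' k : ℕ, ‖(iteratedDeriv k φ 0 / (k.factorial : ℂ)) * iteratedDeriv k g z‖ :=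
          norm_tsum_le_tsum_norm hsumm2
      _ ≤ ∑' k : ℕ, (Cφ * (M * Real.exp (suppFn K z + ‖z‖ + (k₀ + 1) * ρ)))
            * (1/2 : ℝ) ^ k :=
          Summable.tsum_le_tsum hnorm hsumm2 (summable_geometric_two.mul_left _)
      _ = (Cφ * (M * Real.exp (suppFn K z + ‖z‖ + (k₀ + 1) * ρ))) * 2 := by
          rw [tsum_mul_left, tsum_geometric_two]
      _ = (2 * Cφ * Real.exp ((k₀ + 1) * (2 * β))) * M
            * Real.exp (suppFn K z + ‖z‖) := by
          rw [← hρdef, Real.exp_add]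
          ring

lemma my_deriv (φ f : ℂ → ℂ) {M₀ A : ℝ} (hM₀ : 0 ≤ M₀) (hA : 0 ≤ A)
    (hbd : ∀ n : ℕ, ‖(phiD φ)^[n] f 0‖ ≤ M₀ * A ^ n) :
    deriv (PhiT φ f) = PhiT φ (phiD φ f) := by
  funext x
  set a : ℕ → ℂ := fun n => (phiD φ)^[n] f 0 with ha
  set R : ℝ := ‖x‖ + 1 with hRdef
  have hRpos : 0 < R := by positivity
  set F : ℕ → ℂ → ℂ := fun n w => a n * w ^ n / (n.factorial : ℂ) with hF
  have hPhiT : PhiT φ f = fun w => ∑' n, F n w := rfl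
  have husum : Summable (fun n : ℕ => M₀ * ((A * R) ^ n / (n.factorial : ℝ))) :=
    (Real.summable_pow_div_factorial (A * R)).mul_left M₀
  have hFb : ∀ (n : ℕ) (w : ℂ), w ∈ Metric.ball (0:ℂ) R →
      ‖F n w‖ ≤ M₀ * ((A * R) ^ n / (n.factorial : ℝ)) := by
    intro n w hw
    have hwR : ‖w‖ ≤ R := by
      have := Metric.mem_ball.mp hw
      simp only [dist_zero_right] at this
      exact le_of_lt (by simpa using this)
    have hfac : (0:ℝ) < (n.factorial : ℝ) := by exact_mod_cast n.factorial_pos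
    have : ‖F n w‖ = ‖a n‖ * ‖w‖ ^ n / (n.factorial : ℝ) := by
      simp only [hF]
      rw [norm_div, norm_mul, Complex.norm_natCast, norm_pow]
    rw [this]
    calc ‖a n‖ * ‖w‖ ^ n / (n.factorial : ℝ)
        ≤ (M₀ * A ^ n) * R ^ n / (n.factorial : ℝ) := by
          gcongr
          exact hbd n
      _ = M₀ * ((A * R) ^ n / (n.factorial : ℝ)) := by rw [mul_pow]; ring
  have hFd : ∀ n : ℕ, DifferentiableOn ℂ (F n) (Metric.ball (0:ℂ) R) := by
    intro n
    exact (((differentiable_const (a n)).mul (differentiable_pow n)).div_const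
      ((n.factorial : ℂ))).differentiableOn
  have hx : x ∈ Metric.ball (0:ℂ) R := by
    simp only [Metric.mem_ball, dist_zero_right, hRdef]
    simpa using lt_add_one (‖x‖)
  have hsum := hasSum_deriv_of_summable_norm husum hFd Metric.isOpen_ball hFb hx
  have hder : ∀ n : ℕ, deriv (F n) x = a n * ((n:ℂ) * x ^ (n - 1)) / (n.factorial : ℂ) := by
    intro n
    exact (((hasDerivAt_pow n x).const_mul (a n)).div_const ((n.factorial : ℂ))).deriv
  have h1 : deriv (PhiT φ f) x = ∑' n : ℕ, a n * ((n:ℂ) * x ^ (n - 1)) / (n.factorial : ℂ) := by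
    rw [hPhiT, ← hsum.tsum_eq]
    exact tsum_congr hder
  rw [h1]
  have hs2 : Summable (fun n : ℕ => a n * ((n:ℂ) * x ^ (n - 1)) / (n.factorial : ℂ)) :=
    hsum.summable.congr hder
  rw [← Summable.sum_add_tsum_nat_add 1 hs2]
  simp only [Finset.range_one, Finset.sum_singleton, Nat.cast_zero, zero_mul, mul_zero,
    zero_div, zero_add]
  show ∑' n : ℕ, a (n + 1) * ((((n:ℕ) + 1 : ℕ) : ℂ) * x ^ ((n + 1) - 1)) / (((n+1).factorial : ℂ))
      = PhiT φ (phiD φ f) x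
  have hPhiT2 : PhiT φ (phiD φ f) x = ∑' n : ℕ, a (n + 1) * x ^ n / (n.factorial : ℂ) := by
    simp only [PhiT]
    refine tsum_congr fun n => ?_
    rw [ha]
    rw [← Function.iterate_succ_apply]
  rw [hPhiT2]
  refine tsum_congr fun n => ?_
  have hfz : ((n.factorial : ℂ)) ≠ 0 := Nat.cast_ne_zero.mpr n.factorial_ne_zero
  have hsz : (((n:ℕ) + 1 : ℕ) : ℂ) ≠ 0 := Nat.cast_ne_zero.mpr (Nat.succ_ne_zero n)
  rw [Nat.succ_sub_one, Nat.factorial_succ, Nat.cast_mul]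
  have hre : a (n + 1) * ((((n:ℕ) + 1 : ℕ) : ℂ) * x ^ n)
      = (((n:ℕ) + 1 : ℕ) : ℂ) * (a (n + 1) * x ^ n) := by ring
  rw [hre, mul_div_mul_left _ _ hsz, mul_div_assoc]


/-- `(Φ_φ f)' = Φ_φ (φ(D) f)`, i.e. `D` is quasi-conjugated to `φ(D)` by `Φ_φ`. -/
theorem stmt_14 (K : Set ℂ) (hKne : K.Nonempty) (hKcomp : IsCompact K) (hKconv : Convex ℝ K)
    (φ : ℂ → ℂ) (hφ : Differentiable ℂ φ) (hφτ : expType φ < ⊤)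
    (f : ℂ → ℂ) (hf : memExp K f) :
    deriv (PhiT φ f) = PhiT φ (phiD φ f) := by
  obtain ⟨r, hr⟩ := hKcomp.isBounded.subset_closedBall 0
  set k₀ : ℝ := max r 0 with hk₀def
  have hk₀ : 0 ≤ k₀ := le_max_right _ _
  have hK0 : ∀ u ∈ K, ‖u‖ ≤ k₀ := by
    intro u hu
    have := hr hu
    simp only [Metric.mem_closedBall, dist_zero_right] at this
    exact le_trans (by simpa using this) (le_max_left _ _)
  obtain ⟨Cφ, τ, hCφ1, hτ0, hgr⟩ := my_growth hφ hφτ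
  have hβ : 1 ≤ Real.exp τ := Real.one_le_exp hτ0
  have hD := my_coeff hφ hCφ1 hτ0 hgr
  set β : ℝ := Real.exp τ with hβdef
  set C : ℝ := 2 * Cφ * Real.exp ((k₀ + 1) * (2 * β)) with hCdef
  have hCφ0 : (0:ℝ) ≤ Cφ := le_trans zero_le_one hCφ1
  have hC0 : 0 ≤ C := by positivity
  obtain ⟨m, hm⟩ := hf.2 1 le_rfl
  set M : ℝ := max m 0 with hMdef
  have hM0 : 0 ≤ M := le_max_right _ _
  have hfb : ∀ z, ‖f z‖ ≤ M * Real.exp (suppFn K z + ‖z‖) := by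
    intro z
    have h1 : ‖f z‖
        * Real.exp (-suppFn K z - ‖z‖ / ((1:ℕ):ℝ)) ≤ m := hm ⟨z, rfl⟩
    have h2 : ‖f z‖ * Real.exp (-suppFn K z - ‖z‖) ≤ M := by
      have h1' := h1.trans (le_max_left m 0)
      rw [← hMdef] at h1'
      simpa using h1'
    have h3 := mul_le_mul_of_nonneg_right h2 (Real.exp_pos (suppFn K z + ‖z‖)).le
    rwa [mul_assoc, ← Real.exp_add,
      (by ring : -suppFn K z - ‖z‖ + (suppFn K z + ‖z‖) = 0),
      Real.exp_zero, mul_one] at h3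
  have hIter : ∀ n : ℕ, Differentiable ℂ ((phiD φ)^[n] f) ∧
      ∀ z, ‖(phiD φ)^[n] f z‖
        ≤ C ^ n * M * Real.exp (suppFn K z + ‖z‖) := by
    intro n
    induction n with
    | zero => exact ⟨hf.1, by simpa using hfb⟩
    | succ n ih =>
      rw [Function.iterate_succ_apply']
      have key := my_key hKne hk₀ hK0 hCφ0 hβ hD
        (M := C ^ n * M) (by positivity) ih.1 ih.2
      refine ⟨key.1, fun z => (key.2 z).trans (le_of_eq ?_)⟩
      rw [← hCdef, pow_succ]
      ring
  have hbd : ∀ n : ℕ, ‖(phiD φ)^[n] f 0‖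
      ≤ (M * Real.exp (suppFn K 0)) * C ^ n := by
    intro n
    have h := (hIter n).2 0
    simp only [norm_zero, add_zero] at h
    exact h.trans (le_of_eq (by ring))
  exact my_deriv φ f (by positivity) hC0 hbd
end
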